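/- Let M, N ≥ 1 and let W₁A, W₁B ∈ ℂ^{M×N} be the per-polarization excitation matrices of a dual-polarized uniform rectangular protoarray. Define the companion matrices W₂A = −J_M · conj(W₁B) · J_N and W₂B = J_M · conj(W₁A) · J_N, and the vertically expanded matrices WA = [W₁A ; W₂A] ∈ ℂ^{2M×N}, WB = [W₁B ; W₂B] ∈ ℂ^{2M×N} obtained by stacking the companion below the protoarray (row index m of the companion block corresponds to overall row M+m). Then for all ψy, ψz ∈ ℝ: |∑_{m<2M, n<N} (WA)_{m,n} e^{i(nψy+mψz)}|² + |∑_{m<2M, n<N} (WB)_{m,n} e^{i(nψy+mψz)}|² = 2·(|∑_{m<M, n<N} (W₁A)_{m,n} e^{i(nψy+mψz)}|² + |∑_{m<M, n<N} (W₁B)_{m,n} e^{i(nψy+mψz)}|²). -/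

import Mathlib

open Finset

/-- `(m,n)` entry of the steering matrix of an `M×N` uniform rectangular array:
`exp(i(n ψy + m ψz))`. -/
noncomputable def steerM (M N : ℕ) (ψy ψz : ℝ) : Fin M → Fin N → ℂ :=
  fun m n => Complex.exp (Complex.I * (((n : ℕ) : ℂ) * (ψy : ℂ) + ((m : ℕ) : ℂ) * (ψz : ℂ)))

/-- Radiated far field of an `M×N` array with excitation `W`:
`F(W) = ∑_{m,n} W m n · exp(i(n ψy + m ψz))`. -/
noncomputable def fieldF {M N : ℕ} (W : Fin M → Fin N → ℂ) (ψy ψz : ℝ) : ℂ :=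
  ∑ m, ∑ n, W m n * steerM M N ψy ψz m n

lemma aux_abs_exp_I_mul (t : ℝ) : ‖Complex.exp (Complex.I * (t : ℂ))‖ = 1 := by
  rw [Complex.norm_exp]
  simp [Complex.mul_re]

lemma aux_key (a b c : ℂ) (hc : ‖c‖ = 1) :
    ‖a - c * (starRingEnd ℂ) b‖ ^ 2 + ‖b + c * (starRingEnd ℂ) a‖ ^ 2
      = 2 * (‖a‖ ^ 2 + ‖b‖ ^ 2) := by
  have hc' : Complex.normSq c = 1 := by
    rw [← Complex.sq_norm, hc]; norm_num
  simp only [Complex.sq_norm]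
  rw [sub_eq_add_neg, Complex.normSq_add, Complex.normSq_add, Complex.normSq_neg,
    Complex.normSq_mul, Complex.normSq_mul, Complex.normSq_conj, Complex.normSq_conj, hc']
  have h1 : a * (starRingEnd ℂ) (-(c * (starRingEnd ℂ) b))
      = -(b * (starRingEnd ℂ) (c * (starRingEnd ℂ) a)) := by
    simp only [map_neg, map_mul, Complex.conj_conj]
    ring
  rw [h1, Complex.neg_re]
  ring

lemma aux_rev_cast {M : ℕ} (hM : 1 ≤ M) (m : Fin M) :
    ((m.rev : ℕ) : ℂ) = ((M - 1 : ℕ) : ℂ) - ((m : ℕ) : ℂ) := by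
  have h : (m : ℕ) + 1 ≤ M := m.isLt
  rw [Fin.val_rev, Nat.cast_sub h, Nat.cast_sub hM]
  push_cast
  ring

lemma aux_steer_rev {M N : ℕ} (hM : 1 ≤ M) (hN : 1 ≤ N) (ψy ψz : ℝ) (m : Fin M) (n : Fin N) :
    steerM M N ψy ψz m.rev n.rev
      = Complex.exp (Complex.I * (((N - 1 : ℕ) : ℂ) * ψy + ((M - 1 : ℕ) : ℂ) * ψz))
        * (starRingEnd ℂ) (steerM M N ψy ψz m n) := by
  unfold steerM
  rw [← Complex.exp_conj, ← Complex.exp_add]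
  congr 1
  simp only [map_add, map_mul, Complex.conj_I, Complex.conj_natCast, Complex.conj_ofReal,
    aux_rev_cast hM m, aux_rev_cast hN n]
  ring

theorem asi_ura_vertical_expansion_preserves_pattern
    (M N : ℕ) (hM : 1 ≤ M) (hN : 1 ≤ N)
    (W1A W1B : Fin M → Fin N → ℂ)
    (W2A W2B : Fin M → Fin N → ℂ)
    (h2A : W2A = fun m n => -(starRingEnd ℂ) (W1B m.rev n.rev))
    (h2B : W2B = fun m n => (starRingEnd ℂ) (W1A m.rev n.rev))
    (WA WB : Fin (M + M) → Fin N → ℂ)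
    (hA : WA = fun m n => Fin.append (fun i => W1A i n) (fun i => W2A i n) m)
    (hB : WB = fun m n => Fin.append (fun i => W1B i n) (fun i => W2B i n) m)
    (ψy ψz : ℝ) :
    ‖fieldF WA ψy ψz‖ ^ 2 + ‖fieldF WB ψy ψz‖ ^ 2
      = 2 * (‖fieldF W1A ψy ψz‖ ^ 2 + ‖fieldF W1B ψy ψz‖ ^ 2) := by
  subst h2A h2B hA hB
  set e : ℂ := Complex.exp (Complex.I * (((N - 1 : ℕ) : ℂ) * ψy + ((M - 1 : ℕ) : ℂ) * ψz)) with he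
  set g : ℂ := Complex.exp (Complex.I * ((M : ℂ) * ψz)) with hg
  set c : ℂ := g * e with hc
  -- steering on the two blocks
  have hcast : ∀ (m : Fin M) (n : Fin N),
      steerM (M + M) N ψy ψz (Fin.castAdd M m) n = steerM M N ψy ψz m n := by
    intro m n; rfl
  have hnat : ∀ (m : Fin M) (n : Fin N),
      steerM (M + M) N ψy ψz (Fin.natAdd M m) n = g * steerM M N ψy ψz m n := by
    intro m n
    unfold steerM
    rw [hg, ← Complex.exp_add]
    congr 1
    have : ((Fin.natAdd M m : Fin (M + M)) : ℕ) = M + (m : ℕ) := rfl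
    rw [this]
    push_cast
    ring
  -- split sums over the stacked array
  have split : ∀ (U V : Fin M → Fin N → ℂ),
      fieldF (fun m n => Fin.append (fun i => U i n) (fun i => V i n) m) ψy ψz
        = fieldF U ψy ψz + g * fieldF V ψy ψz := by
    intro U V
    unfold fieldF
    rw [Fin.sum_univ_add]
    congr 1
    · apply Finset.sum_congr rfl; intro m _
      apply Finset.sum_congr rfl; intro n _
      simp only [Fin.append_left, hcast]
    · rw [Finset.mul_sum]
      apply Finset.sum_congr rfl; intro m _
      rw [Finset.mul_sum]
      apply Finset.sum_congr rfl; intro n _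
      simp only [Fin.append_right, hnat]
      ring
  -- the companion-block fields
  have hrevsum : ∀ (U : Fin M → Fin N → ℂ),
      fieldF (fun m n => (starRingEnd ℂ) (U m.rev n.rev)) ψy ψz
        = e * (starRingEnd ℂ) (fieldF U ψy ψz) := by
    intro U
    unfold fieldF
    rw [map_sum, Finset.mul_sum]
    rw [← Equiv.sum_comp Fin.revPerm
      (fun m => ∑ n, (starRingEnd ℂ) (U m.rev n.rev) * steerM M N ψy ψz m n)]
    apply Finset.sum_congr rfl; intro m _
    rw [map_sum, Finset.mul_sum]
    rw [← Equiv.sum_comp Fin.revPerm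
      (fun n => (starRingEnd ℂ) (U (Fin.revPerm m).rev n.rev)
        * steerM M N ψy ψz (Fin.revPerm m) n)]
    apply Finset.sum_congr rfl; intro n _
    simp only [Fin.revPerm_apply, Fin.rev_rev]
    rw [aux_steer_rev hM hN, map_mul]
    ring
  have hA' : fieldF (fun m n =>
        Fin.append (fun i => W1A i n) (fun i => -(starRingEnd ℂ) (W1B i.rev n.rev)) m) ψy ψz
      = fieldF W1A ψy ψz - c * (starRingEnd ℂ) (fieldF W1B ψy ψz) := by
    rw [split]
    have : fieldF (fun m n => -(starRingEnd ℂ) (W1B m.rev n.rev)) ψy ψz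
        = -(e * (starRingEnd ℂ) (fieldF W1B ψy ψz)) := by
      rw [← hrevsum W1B]
      unfold fieldF
      rw [← Finset.sum_neg_distrib]
      apply Finset.sum_congr rfl; intro m _
      rw [← Finset.sum_neg_distrib]
      apply Finset.sum_congr rfl; intro n _
      ring
    rw [this, hc]
    ring
  have hB' : fieldF (fun m n =>
        Fin.append (fun i => W1B i n) (fun i => (starRingEnd ℂ) (W1A i.rev n.rev)) m) ψy ψz
      = fieldF W1B ψy ψz + c * (starRingEnd ℂ) (fieldF W1A ψy ψz) := by
    rw [split, hrevsum W1A, hc]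
    ring
  rw [hA', hB']
  apply aux_key
  rw [hc, norm_mul, hg, he]
  have h1 : (Complex.I * ((M : ℂ) * ψz)) = Complex.I * (((M : ℝ) * ψz : ℝ) : ℂ) := by push_cast; ring
  have h2 : (Complex.I * (((N - 1 : ℕ) : ℂ) * ψy + ((M - 1 : ℕ) : ℂ) * ψz))
      = Complex.I * ((((N - 1 : ℕ) : ℝ) * ψy + ((M - 1 : ℕ) : ℝ) * ψz : ℝ) : ℂ) := by
    push_cast; ring
  rw [h1, h2, aux_abs_exp_I_mul, aux_abs_exp_I_mul]
  norm_num
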